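/- Let V be a finite nonempty set of n vertices and S : V → V → ℝ a symmetric, nonnegative separation function with S v v = 0. Then for every valid assignment C : V → ℝ, the chain of lower bounds S_min(V, S) ≤ H(S) ≤ R(C) holds: the minimum spanning tree weight of the complete weighted graph (V, S) is at most the minimum Hamiltonian path cost, which is at most the range of any valid assignment. -/

import Mathlib

open Finset

variable {V : Type*}

/-- Cost of the Hamiltonian path ordering `h : Fin n ≃ V`:
`Σ_{k=0}^{n-2} S (h k) (h (k+1))`. -/
noncomputable def hamCost (n : ℕ) (S : V → V → ℝ) (h : Fin n ≃ V) : ℝ :=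
  ∑ k : Fin (n - 1),
    S (h ⟨(k : ℕ), by have := k.isLt; omega⟩) (h ⟨(k : ℕ) + 1, by have := k.isLt; omega⟩)

/-- `H(S)`: the minimum Hamiltonian path cost over all bijections `Fin n ≃ V`. -/
noncomputable def hamMin (V : Type*) (n : ℕ) (S : V → V → ℝ) : ℝ :=
  sInf (Set.range fun h : Fin n ≃ V => hamCost n S h)

-- Total weight (w.r.t. the symmetric weight function `S`) of the edges of a
-- graph `T` on `V`: each unordered edge `{x, y}` contributes `S x y` once
-- (note `S` is symmetric, hence the division by 2).
open Classical in
noncomputable def graphWeight [Fintype V] (S : V → V → ℝ) (T : SimpleGraph V) : ℝ :=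
  (∑ x : V, ∑ y : V, if T.Adj x y then S x y else 0) / 2

/-- Minimum total weight over all spanning trees of the complete weighted graph
`(V, S)`; a spanning tree of the complete graph on `V` is precisely a simple
graph on `V` that is a tree (connected and acyclic). -/
noncomputable def mstMin (V : Type*) [Fintype V] (S : V → V → ℝ) : ℝ :=
  sInf {w : ℝ | ∃ T : SimpleGraph V, T.IsTree ∧ graphWeight S T = w}

/-- An assignment is valid if `|C x − C y| ≥ S x y` for all distinct `x, y`. -/
def IsValidAssignment (S : V → V → ℝ) (C : V → ℝ) : Prop :=
  ∀ x y : V, x ≠ y → S x y ≤ |C x - C y|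

/-- Range of an assignment: max value minus min value. -/
noncomputable def rangeOf [Fintype V] [Nonempty V] (C : V → ℝ) : ℝ :=
  univ.sup' univ_nonempty C - univ.inf' univ_nonempty C


lemma cut_walk {α : Type*} {G : SimpleGraph α} (f : α → Bool)
    (hf : ∀ a b, G.Adj a b → f a = f b) {u v : α} (p : G.Walk u v) : f u = f v := by
  induction p with
  | nil => rfl
  | cons ha _ ih => exact (hf _ _ ha).trans ih

lemma pathGraph_no_reach {n : ℕ} {v w : Fin n} (hvw : (v : ℕ) + 1 = (w : ℕ)) :
    ¬ (SimpleGraph.pathGraph n \ SimpleGraph.fromEdgeSet {s(v, w)}).Reachable v w := by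
  rintro ⟨p⟩
  have hf : ∀ a b, (SimpleGraph.pathGraph n \ SimpleGraph.fromEdgeSet {s(v, w)}).Adj a b →
      (fun a : Fin n => decide ((a : ℕ) ≤ (v : ℕ))) a
        = (fun a : Fin n => decide ((a : ℕ) ≤ (v : ℕ))) b := by
    intro a b hab
    simp only [SimpleGraph.sdiff_adj, SimpleGraph.fromEdgeSet_adj, Set.mem_singleton_iff,
      SimpleGraph.pathGraph_adj, not_and] at hab
    obtain ⟨hadj, hne⟩ := hab
    have hab' : a ≠ b := by
      intro h; subst h; omega
    have hne2 : ¬(s(a, b) = s(v, w)) := fun h => (hne h) hab'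
    rw [Sym2.eq_iff] at hne2
    push_neg at hne2
    simp only [Fin.ext_iff] at hne2 hab'
    simp only [decide_eq_decide]
    omega
  have key := cut_walk _ hf p
  simp at key; omega

lemma pathGraph_isAcyclic (n : ℕ) : (SimpleGraph.pathGraph n).IsAcyclic := by
  rw [SimpleGraph.isAcyclic_iff_forall_adj_isBridge]
  intro v w hvw
  rw [SimpleGraph.isBridge_iff]
  rw [SimpleGraph.pathGraph_adj] at hvw
  rcases hvw with h | h
  · exact pathGraph_no_reach h
  · rw [Sym2.eq_swap]
    intro hr
    exact pathGraph_no_reach h hr.symm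

lemma weight_eq [Fintype V] (n : ℕ) (S : V → V → ℝ)
    (hsymm : ∀ x y : V, S x y = S y x) (h : Fin n ≃ V) :
    graphWeight S ((SimpleGraph.pathGraph n).comap h.symm.toEmbedding) = hamCost n S h := by
  classical
  set F : ℕ → ℝ := fun i => if hi : i + 1 < n then
    S (h ⟨i, by omega⟩) (h ⟨i + 1, hi⟩) else 0 with hF
  have hsum : ∑ x : V, ∑ y : V,
      (if ((SimpleGraph.pathGraph n).comap h.symm.toEmbedding).Adj x y then S x y else 0)
      = ∑ i : Fin n, ∑ j : Fin n,
        (if (SimpleGraph.pathGraph n).Adj i j then S (h i) (h j) else 0) := by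
    rw [← Equiv.sum_comp h (fun x => ∑ y : V, _)]
    refine Finset.sum_congr rfl fun i _ => ?_
    rw [← Equiv.sum_comp h (fun y => _)]
    refine Finset.sum_congr rfl fun j _ => ?_
    simp [SimpleGraph.comap_adj]
  have hsplit : ∀ i j : Fin n,
      (if (SimpleGraph.pathGraph n).Adj i j then S (h i) (h j) else 0)
      = (if (i : ℕ) + 1 = (j : ℕ) then S (h i) (h j) else 0)
        + (if (j : ℕ) + 1 = (i : ℕ) then S (h i) (h j) else 0) := by
    intro i j
    by_cases h1 : (i : ℕ) + 1 = (j : ℕ) <;> by_cases h2 : (j : ℕ) + 1 = (i : ℕ) <;>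
      simp [SimpleGraph.pathGraph_adj, h1, h2] <;> omega
  have hinner : ∀ i : Fin n,
      (∑ j : Fin n, if (i : ℕ) + 1 = (j : ℕ) then S (h i) (h j) else 0) = F (i : ℕ) := by
    intro i
    by_cases hi : (i : ℕ) + 1 < n
    · rw [Finset.sum_eq_single (⟨(i : ℕ) + 1, hi⟩ : Fin n)]
      · rw [if_pos rfl, hF]
        simp only [dif_pos hi]
      · intro b _ hb
        rw [if_neg]
        intro hc
        exact hb (Fin.ext hc.symm)
      · intro hmem; exact absurd (Finset.mem_univ _) hmem
    · rw [Finset.sum_eq_zero, hF]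
      · simp [dif_neg hi]
      · intro j _
        rw [if_neg]
        have := j.isLt
        omega
  have hswap : ∑ i : Fin n, ∑ j : Fin n,
      (if (j : ℕ) + 1 = (i : ℕ) then S (h i) (h j) else 0)
      = ∑ i : Fin n, ∑ j : Fin n, (if (i : ℕ) + 1 = (j : ℕ) then S (h i) (h j) else 0) := by
    rw [Finset.sum_comm]
    refine Finset.sum_congr rfl fun i _ => Finset.sum_congr rfl fun j _ => ?_
    rw [hsymm]
  have hA : ∑ i : Fin n, ∑ j : Fin n,
      (if (i : ℕ) + 1 = (j : ℕ) then S (h i) (h j) else 0) = hamCost n S h := by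
    have h1 : ∑ i : Fin n, ∑ j : Fin n,
        (if (i : ℕ) + 1 = (j : ℕ) then S (h i) (h j) else 0) = ∑ i : Fin n, F (i : ℕ) :=
      Finset.sum_congr rfl fun i _ => hinner i
    rw [h1, Fin.sum_univ_eq_sum_range F n]
    have h2 : ∑ i ∈ Finset.range (n - 1), F i = ∑ i ∈ Finset.range n, F i := by
      refine Finset.sum_subset (Finset.range_mono (by omega)) fun i hi hni => ?_
      simp only [Finset.mem_range] at hi hni
      rw [hF]; exact dif_neg (by omega)
    rw [← h2]
    rw [hamCost, ← Fin.sum_univ_eq_sum_range F (n - 1)]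
    refine Finset.sum_congr rfl fun k _ => ?_
    have hk : (k : ℕ) + 1 < n := by have := k.isLt; omega
    rw [hF]
    simp only [dif_pos hk]
  rw [graphWeight]
  convert_to (∑ i : Fin n, ∑ j : Fin n,
      (if (SimpleGraph.pathGraph n).Adj i j then S (h i) (h j) else 0)) / 2 = hamCost n S h
  · rw [← hsum]
    congr
  calc (∑ i : Fin n, ∑ j : Fin n,
        (if (SimpleGraph.pathGraph n).Adj i j then S (h i) (h j) else 0)) / 2
      = (∑ i : Fin n, ∑ j : Fin n,
          ((if (i : ℕ) + 1 = (j : ℕ) then S (h i) (h j) else 0)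
            + (if (j : ℕ) + 1 = (i : ℕ) then S (h i) (h j) else 0))) / 2 := by
        congr 1
        exact Finset.sum_congr rfl fun i _ => Finset.sum_congr rfl fun j _ => hsplit i j
    _ = (hamCost n S h + hamCost n S h) / 2 := by
        rw [show (∑ i : Fin n, ∑ j : Fin n,
          ((if (i : ℕ) + 1 = (j : ℕ) then S (h i) (h j) else 0)
            + (if (j : ℕ) + 1 = (i : ℕ) then S (h i) (h j) else 0)))
          = (∑ i : Fin n, ∑ j : Fin n, (if (i : ℕ) + 1 = (j : ℕ) then S (h i) (h j) else 0))
            + ∑ i : Fin n, ∑ j : Fin n, (if (j : ℕ) + 1 = (i : ℕ) then S (h i) (h j) else 0) by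
            rw [← Finset.sum_add_distrib]
            exact Finset.sum_congr rfl fun i _ => Finset.sum_add_distrib]
        rw [hswap, hA]
    _ = hamCost n S h := by ring

lemma key_lemma (n : ℕ) (hn : 0 < n) (S : V → V → ℝ) (C : V → ℝ)
    (hC : ∀ x y : V, x ≠ y → S x y ≤ |C x - C y|) (h : Fin n ≃ V)
    (hmono : Monotone (C ∘ h)) :
    hamCost n S h ≤ C (h ⟨n - 1, by omega⟩) - C (h ⟨0, hn⟩) := by
  classical
  set f : ℕ → ℝ := fun k => if hk : k < n then C (h ⟨k, hk⟩) else 0 with hf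
  have h1 : hamCost n S h ≤ ∑ k : Fin (n - 1), (f ((k : ℕ) + 1) - f (k : ℕ)) := by
    rw [hamCost]
    refine Finset.sum_le_sum fun k _ => ?_
    have hk0 := k.isLt
    have hk1 : (k : ℕ) < n := by omega
    have hk2 : (k : ℕ) + 1 < n := by omega
    rw [hf]
    simp only [dif_pos hk1, dif_pos hk2]
    have hxy : h ⟨(k : ℕ), hk1⟩ ≠ h ⟨(k : ℕ) + 1, hk2⟩ := fun hcon => by
      have := h.injective hcon
      simp [Fin.ext_iff] at this
    have hle : C (h ⟨(k : ℕ), hk1⟩) ≤ C (h ⟨(k : ℕ) + 1, hk2⟩) := hmono (by simp [Fin.le_def])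
    have hb := hC _ _ hxy
    rw [abs_sub_comm, abs_of_nonneg (by linarith)] at hb
    exact hb
  have h2 : ∑ k : Fin (n - 1), (f ((k : ℕ) + 1) - f (k : ℕ)) = f (n - 1) - f 0 := by
    rw [Fin.sum_univ_eq_sum_range (fun i => f (i + 1) - f i) (n - 1),
      Finset.sum_range_sub f (n - 1)]
  have h3 : f (n - 1) = C (h ⟨n - 1, by omega⟩) := by rw [hf]; exact dif_pos (by omega)
  have h4 : f 0 = C (h ⟨0, hn⟩) := by rw [hf]; exact dif_pos hn
  rw [h2, h3, h4] at h1
  exact h1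

theorem mst_le_hamMin_le_range
    [Fintype V] [Nonempty V] (n : ℕ) (hn : 0 < n) (hcard : Fintype.card V = n)
    (S : V → V → ℝ)
    (hsymm : ∀ x y : V, S x y = S y x)
    (hnonneg : ∀ x y : V, 0 ≤ S x y)
    (hdiag : ∀ v : V, S v v = 0) :
    ∀ C : V → ℝ, IsValidAssignment S C →
      mstMin V S ≤ hamMin V n S ∧ hamMin V n S ≤ rangeOf C := by
  intro C hC
  classical
  have hne : Nonempty (Fin n ≃ V) := ⟨(Fintype.equivFinOfCardEq hcard).symm⟩
  have hcost_nonneg : ∀ h : Fin n ≃ V, 0 ≤ hamCost n S h := fun h =>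
    Finset.sum_nonneg fun k _ => hnonneg _ _
  have hbddH : BddBelow (Set.range fun h : Fin n ≃ V => hamCost n S h) :=
    ⟨0, by rintro x ⟨h, rfl⟩; exact hcost_nonneg h⟩
  constructor
  · -- mstMin ≤ hamMin
    refine le_csInf (Set.range_nonempty _) ?_
    rintro b ⟨h, rfl⟩
    have hbddT : BddBelow {w : ℝ | ∃ T : SimpleGraph V, T.IsTree ∧ graphWeight S T = w} := by
      refine ⟨0, ?_⟩
      rintro w ⟨T, _, rfl⟩
      have hnn : (0:ℝ) ≤ ∑ x : V, ∑ y : V, if T.Adj x y then S x y else 0 :=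
        Finset.sum_nonneg fun x _ => Finset.sum_nonneg fun y _ => by
          split
          · exact hnonneg x y
          · exact le_rfl
      rw [graphWeight]
      exact div_nonneg hnn (by norm_num)
    refine csInf_le hbddT ?_
    refine ⟨(SimpleGraph.pathGraph n).comap h.symm.toEmbedding, ?_, weight_eq n S hsymm h⟩
    obtain ⟨m, rfl⟩ : ∃ m, n = m + 1 := ⟨n - 1, by omega⟩
    have ι := SimpleGraph.Iso.comap h.symm (SimpleGraph.pathGraph (m + 1))
    constructor
    · exact (SimpleGraph.Iso.connected_iff ι).mpr (SimpleGraph.pathGraph_connected m)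
    · intro v c hc
      exact pathGraph_isAcyclic (m + 1) (c.map ι.toHom) (hc.map ι.toEquiv.injective)
  · -- hamMin ≤ rangeOf C
    set e : Fin n ≃ V := (Fintype.equivFinOfCardEq hcard).symm
    set σ := Tuple.sort (C ∘ e)
    set h : Fin n ≃ V := σ.trans e with hh
    have hmono : Monotone (C ∘ h) := Tuple.monotone_sort (C ∘ e)
    refine le_trans (csInf_le hbddH ⟨h, rfl⟩) ?_
    refine le_trans (key_lemma n hn S C hC h hmono) ?_
    have h1 : C (h ⟨n - 1, by omega⟩) ≤ univ.sup' univ_nonempty C :=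
      Finset.le_sup' C (Finset.mem_univ _)
    have h2 : univ.inf' univ_nonempty C ≤ C (h ⟨0, hn⟩) :=
      Finset.inf'_le C (Finset.mem_univ _)
    rw [rangeOf]
    linarith
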